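/- Let n ≥ 1, G ∈ 𝒢_n, and 1 ≤ k ≤ n. The subgraph of G induced by the vertex set C(k,n) (all vertices at distance between k and n from source) is a disjoint union of exactly 2^k trees, each of which is a complete binary tree of height n − k. -/

import Mathlib

open Finset

noncomputable section

/-- Vertices of a complete binary tree of height `n`: a level `k ≤ n` and an index below `2^k`. -/
abbrev TV (n : ℕ) : Type := Σ k : Fin (n+1), Fin (2^(k : ℕ))

/-- Adjacency in a complete binary tree: one vertex is the parent of the other. -/
def treeAdj (n : ℕ) (a b : TV n) : Prop :=
  ((a.1 : ℕ) + 1 = (b.1 : ℕ) ∧ (b.2 : ℕ) / 2 = (a.2 : ℕ)) ∨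
  ((b.1 : ℕ) + 1 = (a.1 : ℕ) ∧ (a.2 : ℕ) / 2 = (b.2 : ℕ))

instance (n : ℕ) (a b : TV n) : Decidable (treeAdj n a b) := by
  unfold treeAdj; infer_instance

lemma treeAdj_symm (n : ℕ) : Symmetric (treeAdj n) := by
  intro a b h; unfold treeAdj at *; tauto

lemma treeAdj_irrefl (n : ℕ) (a : TV n) : ¬ treeAdj n a a := by
  unfold treeAdj; omega

/-- Vertices of a welded-trees graph: disjoint union of the two trees. -/
abbrev WTV (n : ℕ) : Type := TV n ⊕ TV n

def wtRoot (n : ℕ) : TV n := ⟨⟨0, Nat.succ_pos n⟩, ⟨0, by norm_num⟩⟩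

/-- The root of the left tree. -/
def wtSource (n : ℕ) : WTV n := Sum.inl (wtRoot n)

/-- The root of the right tree. -/
def wtTarget (n : ℕ) : WTV n := Sum.inr (wtRoot n)

instance (n : ℕ) : Inhabited (WTV n) := ⟨wtSource n⟩

/-- The index (among the `2^n` leaves of its tree) of a leaf. -/
def leafIdx {n : ℕ} (a : TV n) : Fin (2^n) := ⟨(a.2 : ℕ) % 2^n, Nat.mod_lt _ (by positivity)⟩

/-- Adjacency in the welded trees graph determined by the welding data `W`
(`W i j = true` iff the `i`-th left leaf is welded to the `j`-th right leaf). -/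
def weldedAdj (n : ℕ) (W : Fin (2^n) → Fin (2^n) → Bool) : WTV n → WTV n → Prop
  | Sum.inl a, Sum.inl b => treeAdj n a b
  | Sum.inr a, Sum.inr b => treeAdj n a b
  | Sum.inl a, Sum.inr b => (a.1 : ℕ) = n ∧ (b.1 : ℕ) = n ∧ W (leafIdx a) (leafIdx b) = true
  | Sum.inr b, Sum.inl a => (a.1 : ℕ) = n ∧ (b.1 : ℕ) = n ∧ W (leafIdx a) (leafIdx b) = true

/-- The welded trees graph determined by the welding data `W`. -/
def weldedGraph (n : ℕ) (W : Fin (2^n) → Fin (2^n) → Bool) : SimpleGraph (WTV n) where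
  Adj := weldedAdj n W
  symm := by
    refine ⟨?_⟩
    rintro (a|a) (b|b) h
    · exact treeAdj_symm n h
    · exact h
    · exact h
    · exact treeAdj_symm n h
  loopless := by
    refine ⟨?_⟩
    rintro (a|a) h
    · exact treeAdj_irrefl n a h
    · exact treeAdj_irrefl n a h

instance (n : ℕ) (W : Fin (2^n) → Fin (2^n) → Bool) : DecidableRel (weldedGraph n W).Adj := by
  rintro (a|a) (b|b)
  · exact inferInstanceAs (Decidable (treeAdj n a b))
  · exact inferInstanceAs (Decidable ((a.1 : ℕ) = n ∧ (b.1 : ℕ) = n ∧ W (leafIdx a) (leafIdx b) = true))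
  · exact inferInstanceAs (Decidable ((b.1 : ℕ) = n ∧ (a.1 : ℕ) = n ∧ W (leafIdx b) (leafIdx a) = true))
  · exact inferInstanceAs (Decidable (treeAdj n a b))

/-- The index of the column of a vertex: its distance to `source`. -/
def colIdx (n : ℕ) (W : Fin (2^n) → Fin (2^n) → Bool) (v : WTV n) : ℕ :=
  (weldedGraph n W).dist (wtSource n) v

/-- The `k`-th column: vertices at distance `k` from `source`. -/
def column (n : ℕ) (W : Fin (2^n) → Fin (2^n) → Bool) (k : ℕ) : Set (WTV n) :=
  {v | colIdx n W v = k}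

/-- The bipartite graph on the leaves of the two trees given by the welding edges. -/
def weldGraphLeaves (n : ℕ) (W : Fin (2^n) → Fin (2^n) → Bool) :
    SimpleGraph (Fin (2^n) ⊕ Fin (2^n)) where
  Adj x y := (∃ i j, x = Sum.inl i ∧ y = Sum.inr j ∧ W i j = true) ∨
             (∃ i j, x = Sum.inr j ∧ y = Sum.inl i ∧ W i j = true)
  symm := by
    refine ⟨?_⟩
    rintro x y (⟨i, j, hx, hy, h⟩ | ⟨i, j, hx, hy, h⟩)
    · exact Or.inr ⟨i, j, hy, hx, h⟩
    · exact Or.inl ⟨i, j, hy, hx, h⟩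
  loopless := by
    refine ⟨?_⟩
    rintro x (⟨i, j, hx, hy, h⟩ | ⟨i, j, hx, hy, h⟩) <;> subst hx <;> simp_all

/-- `W` is a valid welding datum: every leaf is welded to exactly two leaves of the other
tree, and the welding edges form a single cycle (equivalently, the 2-regular bipartite
welding graph on the `2^{n+1}` leaves is connected). -/
def IsWeldedData (n : ℕ) (W : Fin (2^n) → Fin (2^n) → Bool) : Prop :=
  (∀ i : Fin (2^n), (univ.filter (fun j => W i j = true)).card = 2) ∧
  (∀ j : Fin (2^n), (univ.filter (fun i => W i j = true)).card = 2) ∧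
  (weldGraphLeaves n W).Connected

end
noncomputable section

/-- The complete binary tree of height `m`, as a simple graph. -/
def cbtGraph (m : ℕ) : SimpleGraph (TV m) where
  Adj := treeAdj m
  symm := ⟨fun a b h => treeAdj_symm m h⟩
  loopless := ⟨fun a => treeAdj_irrefl m a⟩

/-- The union of the columns `C(k), …, C(k')`. -/
def columnUnion (n : ℕ) (W : Fin (2^n) → Fin (2^n) → Bool) (k k' : ℕ) : Set (WTV n) :=
  {v | k ≤ colIdx n W v ∧ colIdx n W v ≤ k'}

end

section WeldedAux

open SimpleGraph

variable {n : ℕ} {W : Fin (2^n) → Fin (2^n) → Bool}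

/-- The "potential" of a vertex: its expected distance from the source. -/
def pot (n : ℕ) : WTV n → ℕ
  | Sum.inl a => (a.1 : ℕ)
  | Sum.inr a => 2*n+1 - (a.1 : ℕ)

lemma pot_adj {u v : WTV n} (h : (weldedGraph n W).Adj u v) :
    pot n v ≤ pot n u + 1 := by
  rcases u with a | a <;> rcases v with b | b
  · have h' : treeAdj n a b := h
    unfold treeAdj at h'
    show (b.1 : ℕ) ≤ (a.1 : ℕ) + 1
    omega
  · have h' : (a.1 : ℕ) = n ∧ (b.1 : ℕ) = n ∧ W (leafIdx a) (leafIdx b) = true := h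
    show 2*n+1 - (b.1 : ℕ) ≤ (a.1 : ℕ) + 1
    omega
  · have h' : (b.1 : ℕ) = n ∧ (a.1 : ℕ) = n ∧ W (leafIdx b) (leafIdx a) = true := h
    show (b.1 : ℕ) ≤ 2*n+1 - (a.1 : ℕ) + 1
    omega
  · have h' : treeAdj n a b := h
    unfold treeAdj at h'
    have ha := a.1.isLt
    have hb := b.1.isLt
    show 2*n+1 - (b.1 : ℕ) ≤ 2*n+1 - (a.1 : ℕ) + 1
    omega

lemma pot_le_length {u v : WTV n} (w : (weldedGraph n W).Walk u v) :
    pot n v ≤ pot n u + w.length := by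
  induction w with
  | nil => simp
  | cons h p ih =>
    have := pot_adj h
    rw [SimpleGraph.Walk.length_cons]
    omega

lemma exists_walk_left_aux (j : ℕ) : ∀ (hj : j < n+1) (i : ℕ) (hi : i < 2^j),
    ∃ w : (weldedGraph n W).Walk (Sum.inl ⟨⟨j, hj⟩, ⟨i, hi⟩⟩) (wtSource n), w.length = j := by
  induction j with
  | zero =>
    intro hj i hi
    interval_cases i
    exact ⟨SimpleGraph.Walk.nil, rfl⟩
  | succ j ih =>
    intro hj i hi
    have hj' : j < n+1 := by omega
    have h2 : 2^(j+1) = 2^j * 2 := pow_succ 2 j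
    have hi' : i/2 < 2^j := by omega
    obtain ⟨w, hw⟩ := ih hj' (i/2) hi'
    have hadj : (weldedGraph n W).Adj (Sum.inl ⟨⟨j+1, hj⟩, ⟨i, hi⟩⟩) (Sum.inl ⟨⟨j, hj'⟩, ⟨i/2, hi'⟩⟩) :=
      Or.inr ⟨rfl, rfl⟩
    exact ⟨SimpleGraph.Walk.cons hadj w, by simp [hw]⟩

lemma exists_walk_left (a : TV n) :
    ∃ w : (weldedGraph n W).Walk (Sum.inl a) (wtSource n), w.length = (a.1 : ℕ) := by
  obtain ⟨⟨j, hj⟩, ⟨i, hi⟩⟩ := a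
  exact exists_walk_left_aux j hj i hi

lemma exists_walk_right_leaf
    (hW2 : ∀ j : Fin (2^n), (Finset.univ.filter (fun i => W i j = true)).card = 2)
    (hj : n < n+1) (i : ℕ) (hi : i < 2^n) :
    ∃ w : (weldedGraph n W).Walk (Sum.inr ⟨⟨n, hj⟩, ⟨i, hi⟩⟩) (wtSource n),
      w.length = n + 1 := by
  set b : TV n := ⟨⟨n, hj⟩, ⟨i, hi⟩⟩ with hb
  have hcard := hW2 (leafIdx b)
  have hne : (Finset.univ.filter (fun i0 => W i0 (leafIdx b) = true)).Nonempty := by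
    rw [← Finset.card_pos, hcard]; norm_num
  obtain ⟨i0, hi0⟩ := hne
  rw [Finset.mem_filter] at hi0
  have hi0W : W i0 (leafIdx b) = true := hi0.2
  set ℓ : TV n := ⟨⟨n, hj⟩, ⟨(i0 : ℕ), i0.isLt⟩⟩ with hℓ
  have hlidx : leafIdx ℓ = i0 := by
    apply Fin.ext
    show (i0 : ℕ) % 2^n = (i0 : ℕ)
    exact Nat.mod_eq_of_lt i0.isLt
  have hadj : (weldedGraph n W).Adj (Sum.inr b) (Sum.inl ℓ) := by
    refine ⟨rfl, rfl, ?_⟩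
    rw [hlidx]; exact hi0W
  obtain ⟨w, hw⟩ := exists_walk_left (W := W) ℓ
  exact ⟨SimpleGraph.Walk.cons hadj w, by simp [hw]; rfl⟩

lemma exists_walk_right_aux
    (hW2 : ∀ j : Fin (2^n), (Finset.univ.filter (fun i => W i j = true)).card = 2)
    (d : ℕ) : ∀ (j : ℕ) (hjd : n ≤ j + d) (hj : j < n+1) (i : ℕ) (hi : i < 2^j),
    ∃ w : (weldedGraph n W).Walk (Sum.inr ⟨⟨j, hj⟩, ⟨i, hi⟩⟩) (wtSource n),
      w.length = 2*n+1 - j := by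
  induction d with
  | zero =>
    intro j hjd hj i hi
    have hjn : j = n := by omega
    subst hjn
    have h := exists_walk_right_leaf hW2 hj i hi
    obtain ⟨w, hw⟩ := h
    exact ⟨w, by omega⟩
  | succ d ih =>
    intro j hjd hj i hi
    by_cases hc : n ≤ j + d
    · exact ih j hc hj i hi
    · have hj1 : j + 1 < n + 1 := by omega
      have h2 : 2^(j+1) = 2^j * 2 := pow_succ 2 j
      have hi2 : 2*i < 2^(j+1) := by omega
      obtain ⟨w, hw⟩ := ih (j+1) (by omega) hj1 (2*i) hi2
      have hadj : (weldedGraph n W).Adj (Sum.inr ⟨⟨j, hj⟩, ⟨i, hi⟩⟩)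
          (Sum.inr ⟨⟨j+1, hj1⟩, ⟨2*i, hi2⟩⟩) := by
        refine Or.inl ⟨rfl, ?_⟩
        show 2*i/2 = i
        omega
      refine ⟨SimpleGraph.Walk.cons hadj w, ?_⟩
      simp [hw]
      omega

lemma exists_walk_right
    (hW2 : ∀ j : Fin (2^n), (Finset.univ.filter (fun i => W i j = true)).card = 2)
    (a : TV n) :
    ∃ w : (weldedGraph n W).Walk (Sum.inr a) (wtSource n), w.length = 2*n+1 - (a.1 : ℕ) := by
  obtain ⟨⟨j, hj⟩, ⟨i, hi⟩⟩ := a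
  exact exists_walk_right_aux hW2 n j (by omega) hj i hi

lemma pot_source : pot n (wtSource n) = 0 := rfl

lemma colIdx_eq_pot
    (hW2 : ∀ j : Fin (2^n), (Finset.univ.filter (fun i => W i j = true)).card = 2)
    (v : WTV n) : colIdx n W v = pot n v := by
  have hex : ∃ w : (weldedGraph n W).Walk v (wtSource n), w.length = pot n v := by
    rcases v with a | a
    · exact exists_walk_left a
    · exact exists_walk_right hW2 a
  obtain ⟨w, hw⟩ := hex
  have hub : (weldedGraph n W).dist (wtSource n) v ≤ pot n v := by
    rw [SimpleGraph.dist_comm]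
    exact hw ▸ SimpleGraph.dist_le w
  have hreach : (weldedGraph n W).Reachable (wtSource n) v := ⟨w.reverse⟩
  obtain ⟨p, hp⟩ := hreach.exists_walk_length_eq_dist
  have hlb := pot_le_length (W := W) p
  rw [pot_source, hp] at hlb
  unfold colIdx
  omega

lemma colIdx_inl
    (hW2 : ∀ j : Fin (2^n), (Finset.univ.filter (fun i => W i j = true)).card = 2)
    (a : TV n) : colIdx n W (Sum.inl a) = (a.1 : ℕ) :=
  colIdx_eq_pot hW2 _

lemma colIdx_inr
    (hW2 : ∀ j : Fin (2^n), (Finset.univ.filter (fun i => W i j = true)).card = 2)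
    (a : TV n) : colIdx n W (Sum.inr a) = 2*n+1 - (a.1 : ℕ) :=
  colIdx_eq_pot hW2 _


variable {k : ℕ}

lemma mem_columnUnion_iff
    (hW2 : ∀ j : Fin (2^n), (Finset.univ.filter (fun i => W i j = true)).card = 2)
    (hk2 : k ≤ n) (v : WTV n) :
    v ∈ columnUnion n W k n ↔ ∃ a : TV n, v = Sum.inl a ∧ k ≤ (a.1 : ℕ) := by
  rcases v with a | a
  · have h1 := colIdx_inl hW2 (W := W) a
    have h2 := a.1.isLt
    constructor
    · rintro ⟨hl, hu⟩
      exact ⟨a, rfl, by omega⟩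
    · rintro ⟨b, hb, hkb⟩
      obtain rfl : a = b := by injection hb
      exact ⟨by omega, by omega⟩
  · have h1 := colIdx_inr hW2 (W := W) a
    have h2 := a.1.isLt
    constructor
    · rintro ⟨hl, hu⟩
      omega
    · rintro ⟨b, hb, -⟩
      exact absurd hb (by simp)

/-- The index (below `2^k`) of the level-`k` ancestor of a left-tree vertex. -/
def fiber (n k : ℕ) : WTV n → ℕ
  | Sum.inl a => (a.2 : ℕ) / 2^((a.1 : ℕ) - k)
  | Sum.inr _ => 0

lemma fiber_lt
    (hW2 : ∀ j : Fin (2^n), (Finset.univ.filter (fun i => W i j = true)).card = 2)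
    (hk2 : k ≤ n) {v : WTV n} (hv : v ∈ columnUnion n W k n) :
    fiber n k v < 2^k := by
  obtain ⟨a, rfl, hka⟩ := (mem_columnUnion_iff hW2 hk2 v).mp hv
  show (a.2 : ℕ) / 2^((a.1 : ℕ) - k) < 2^k
  rw [Nat.div_lt_iff_lt_mul (by positivity)]
  calc (a.2 : ℕ) < 2^(a.1 : ℕ) := a.2.isLt
    _ = 2^k * 2^((a.1 : ℕ) - k) := by rw [← pow_add]; congr 1; omega

lemma fiber_step {a b : TV n} (hka : k ≤ (a.1 : ℕ))
    (h1 : (a.1 : ℕ) + 1 = (b.1 : ℕ)) (h2 : (b.2 : ℕ) / 2 = (a.2 : ℕ)) :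
    fiber n k (Sum.inl b) = fiber n k (Sum.inl a) := by
  show (b.2 : ℕ) / 2^((b.1 : ℕ) - k) = (a.2 : ℕ) / 2^((a.1 : ℕ) - k)
  have hb1 : (b.1 : ℕ) - k = ((a.1 : ℕ) - k) + 1 := by omega
  rw [hb1, pow_succ', ← Nat.div_div_eq_div_mul, h2]

lemma fiber_adj
    (hW2 : ∀ j : Fin (2^n), (Finset.univ.filter (fun i => W i j = true)).card = 2)
    (hk2 : k ≤ n) {u v : WTV n}
    (hu : u ∈ columnUnion n W k n) (hv : v ∈ columnUnion n W k n)
    (h : (weldedGraph n W).Adj u v) : fiber n k u = fiber n k v := by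
  obtain ⟨a, rfl, hka⟩ := (mem_columnUnion_iff hW2 hk2 u).mp hu
  obtain ⟨b, rfl, hkb⟩ := (mem_columnUnion_iff hW2 hk2 v).mp hv
  have h' : treeAdj n a b := h
  rcases h' with ⟨h1, h2⟩ | ⟨h1, h2⟩
  · exact (fiber_step hka h1 h2).symm
  · exact fiber_step hkb h1 h2

lemma TV_ext {m : ℕ} {a b : TV m} (h1 : (a.1 : ℕ) = (b.1 : ℕ)) (h2 : (a.2 : ℕ) = (b.2 : ℕ)) :
    a = b := by
  obtain ⟨⟨j, hj⟩, ⟨i, hi⟩⟩ := a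
  obtain ⟨⟨j', hj'⟩, ⟨i', hi'⟩⟩ := b
  have hjj : j = j' := h1
  subst hjj
  have hii : i = i' := h2
  subst hii
  rfl

/-- The level-`k` vertex with index `r`. -/
def rootS (n k : ℕ) (hk2 : k ≤ n) (r : Fin (2^k)) : WTV n :=
  Sum.inl ⟨⟨k, by omega⟩, ⟨(r : ℕ), r.isLt⟩⟩

lemma root_mem
    (hW2 : ∀ j : Fin (2^n), (Finset.univ.filter (fun i => W i j = true)).card = 2)
    (hk2 : k ≤ n) (r : Fin (2^k)) : rootS n k hk2 r ∈ columnUnion n W k n :=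
  (mem_columnUnion_iff hW2 hk2 _).mpr ⟨_, rfl, le_refl k⟩

lemma fiber_rootS (hk2 : k ≤ n) (r : Fin (2^k)) : fiber n k (rootS n k hk2 r) = (r : ℕ) := by
  show (r : ℕ) / 2^(k - k) = (r : ℕ)
  simp

lemma induce_adj_of {u v : WTV n} (hu : u ∈ columnUnion n W k n)
    (hv : v ∈ columnUnion n W k n) (h : (weldedGraph n W).Adj u v) :
    ((weldedGraph n W).induce (columnUnion n W k n)).Adj ⟨u, hu⟩ ⟨v, hv⟩ := by
  simpa using h

lemma adj_of_induce_adj {u v : ↥(columnUnion n W k n)}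
    (h : ((weldedGraph n W).induce (columnUnion n W k n)).Adj u v) :
    (weldedGraph n W).Adj u.val v.val := by
  simpa using h

lemma reach_root
    (hW2 : ∀ j : Fin (2^n), (Finset.univ.filter (fun i => W i j = true)).card = 2)
    (hk2 : k ≤ n) (d : ℕ) :
    ∀ (v : WTV n) (hv : v ∈ columnUnion n W k n) (r : Fin (2^k)),
    pot n v ≤ k + d → fiber n k v = (r : ℕ) →
    ((weldedGraph n W).induce (columnUnion n W k n)).Reachable ⟨v, hv⟩
      ⟨rootS n k hk2 r, root_mem hW2 hk2 r⟩ := by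
  induction d with
  | zero =>
    intro v hv r hd hr
    obtain ⟨a, rfl, hka⟩ := (mem_columnUnion_iff hW2 hk2 v).mp hv
    have hlev : (a.1 : ℕ) = k := le_antisymm hd hka
    have hsub : (a.1 : ℕ) - k = 0 := by omega
    have hfib : fiber n k (Sum.inl a) = (a.2 : ℕ) := by
      show (a.2 : ℕ) / 2^((a.1 : ℕ) - k) = (a.2 : ℕ)
      rw [hsub]; simp
    have : Sum.inl a = rootS n k hk2 r := by
      unfold rootS
      congr 1
      exact TV_ext hlev (by rw [← hr, hfib])
    exact SimpleGraph.Reachable.refl _ |>.mono le_rfl |>.mono le_rfl |>.trans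
      (by rw [show (⟨Sum.inl a, hv⟩ : ↥(columnUnion n W k n)) =
        ⟨rootS n k hk2 r, root_mem hW2 hk2 r⟩ from Subtype.ext this])
  | succ d ih =>
    intro v hv r hd hr
    by_cases hc : pot n v ≤ k + d
    · exact ih v hv r hc hr
    · obtain ⟨a, rfl, hka⟩ := (mem_columnUnion_iff hW2 hk2 v).mp hv
      obtain ⟨⟨j, hj⟩, ⟨i, hi⟩⟩ := a
      have hlev : pot n (Sum.inl (⟨⟨j, hj⟩, ⟨i, hi⟩⟩ : TV n)) = j := rfl
      rw [hlev] at hd hc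
      have hka' : k ≤ j := hka
      have hjpos : k < j := by omega
      have hj' : j - 1 < n + 1 := by omega
      have h2 : 2^j = 2^(j-1) * 2 := by
        conv_lhs => rw [show j = (j-1)+1 by omega]
        exact pow_succ 2 (j-1)
      have hi2 : i < 2^j := hi
      have hi' : i / 2 < 2^(j-1) := by omega
      set p : WTV n := Sum.inl ⟨⟨j-1, hj'⟩, ⟨i/2, hi'⟩⟩ with hp
      have hpmem : p ∈ columnUnion n W k n :=
        (mem_columnUnion_iff hW2 hk2 p).mpr ⟨_, rfl, by show k ≤ j - 1; omega⟩
      have hadj : (weldedGraph n W).Adj p (Sum.inl (⟨⟨j, hj⟩, ⟨i, hi⟩⟩ : TV n)) := by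
        refine Or.inl ⟨?_, rfl⟩
        show (j - 1) + 1 = j
        omega
      have hfib : fiber n k p = (r : ℕ) := by
        rw [← hr]
        exact (fiber_step (by show k ≤ j - 1; omega) (by show (j-1)+1 = j; omega) rfl).symm
      have hreach := ih p hpmem r (by show j - 1 ≤ k + d; omega) hfib
      exact ((induce_adj_of hv hpmem hadj.symm).reachable).trans hreach

/-- The fiber of a vertex of the middle region, as an element of `Fin (2^k)`. -/
def f0 (n k : ℕ) (W : Fin (2^n) → Fin (2^n) → Bool) :
    ↥(columnUnion n W k n) → Fin (2^k) :=
  fun v => ⟨fiber n k v.val % 2^k, Nat.mod_lt _ (by positivity)⟩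

lemma f0_eq_fiber
    (hW2 : ∀ j : Fin (2^n), (Finset.univ.filter (fun i => W i j = true)).card = 2)
    (hk2 : k ≤ n) (v : ↥(columnUnion n W k n)) :
    (f0 n k W v : ℕ) = fiber n k v.val := by
  show fiber n k v.val % 2^k = fiber n k v.val
  exact Nat.mod_eq_of_lt (fiber_lt hW2 hk2 v.2)

lemma f0_walk
    (hW2 : ∀ j : Fin (2^n), (Finset.univ.filter (fun i => W i j = true)).card = 2)
    (hk2 : k ≤ n) :
    ∀ (u v : ↥(columnUnion n W k n))
      (p : ((weldedGraph n W).induce (columnUnion n W k n)).Walk u v),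
      f0 n k W u = f0 n k W v := by
  intro u v p
  induction p with
  | nil => rfl
  | cons h p ih =>
    refine Eq.trans ?_ ih
    apply Fin.ext
    show fiber n k _ % 2^k = fiber n k _ % 2^k
    rw [fiber_adj hW2 hk2 (by exact Subtype.prop _) (by exact Subtype.prop _)
      (adj_of_induce_adj h)]

lemma mk_eq_root
    (hW2 : ∀ j : Fin (2^n), (Finset.univ.filter (fun i => W i j = true)).card = 2)
    (hk2 : k ≤ n) (v : ↥(columnUnion n W k n)) :
    ((weldedGraph n W).induce (columnUnion n W k n)).connectedComponentMk v =
    ((weldedGraph n W).induce (columnUnion n W k n)).connectedComponentMk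
      ⟨rootS n k hk2 (f0 n k W v), root_mem hW2 hk2 _⟩ := by
  apply SimpleGraph.ConnectedComponent.sound
  have hpot : pot n v.val ≤ k + n := by
    obtain ⟨a, ha, hka⟩ := (mem_columnUnion_iff hW2 hk2 v.val).mp v.2
    have := a.1.isLt
    rw [ha]
    show (a.1 : ℕ) ≤ k + n
    omega
  have := reach_root hW2 hk2 n v.val v.2 (f0 n k W v) hpot (f0_eq_fiber hW2 hk2 v).symm
  convert this

/-- The fiber map on connected components. -/
noncomputable def phi
    (hW2 : ∀ j : Fin (2^n), (Finset.univ.filter (fun i => W i j = true)).card = 2)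
    (hk2 : k ≤ n) :
    ((weldedGraph n W).induce (columnUnion n W k n)).ConnectedComponent → Fin (2^k) :=
  SimpleGraph.ConnectedComponent.lift (f0 n k W) (fun u v p _ => f0_walk hW2 hk2 u v p)

lemma f0_rootS
    (hW2 : ∀ j : Fin (2^n), (Finset.univ.filter (fun i => W i j = true)).card = 2)
    (hk2 : k ≤ n) (r : Fin (2^k)) :
    f0 n k W ⟨rootS n k hk2 r, root_mem hW2 hk2 r⟩ = r := by
  apply Fin.ext
  rw [f0_eq_fiber hW2 hk2, fiber_rootS]

lemma phi_mk
    (hW2 : ∀ j : Fin (2^n), (Finset.univ.filter (fun i => W i j = true)).card = 2)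
    (hk2 : k ≤ n) (v : ↥(columnUnion n W k n)) :
    phi hW2 hk2 (((weldedGraph n W).induce (columnUnion n W k n)).connectedComponentMk v) =
      f0 n k W v := rfl

lemma comp_eq_mk_root
    (hW2 : ∀ j : Fin (2^n), (Finset.univ.filter (fun i => W i j = true)).card = 2)
    (hk2 : k ≤ n)
    (c : ((weldedGraph n W).induce (columnUnion n W k n)).ConnectedComponent) :
    c = ((weldedGraph n W).induce (columnUnion n W k n)).connectedComponentMk
      ⟨rootS n k hk2 (phi hW2 hk2 c), root_mem hW2 hk2 _⟩ := by
  obtain ⟨v, rfl⟩ := c.exists_rep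
  exact mk_eq_root hW2 hk2 v

lemma phi_bijective
    (hW2 : ∀ j : Fin (2^n), (Finset.univ.filter (fun i => W i j = true)).card = 2)
    (hk2 : k ≤ n) : Function.Bijective (phi hW2 hk2) := by
  constructor
  · intro c1 c2 h
    rw [comp_eq_mk_root hW2 hk2 c1, comp_eq_mk_root hW2 hk2 c2, h]
  · intro r
    refine ⟨((weldedGraph n W).induce (columnUnion n W k n)).connectedComponentMk
      ⟨rootS n k hk2 r, root_mem hW2 hk2 r⟩, ?_⟩
    rw [phi_mk hW2 hk2, f0_rootS hW2 hk2]

lemma card_components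
    (hW2 : ∀ j : Fin (2^n), (Finset.univ.filter (fun i => W i j = true)).card = 2)
    (hk2 : k ≤ n) :
    Nat.card ((weldedGraph n W).induce (columnUnion n W k n)).ConnectedComponent = 2^k := by
  rw [Nat.card_eq_of_bijective _ (phi_bijective hW2 hk2)]
  simp

lemma mem_supp_iff_f0
    (hW2 : ∀ j : Fin (2^n), (Finset.univ.filter (fun i => W i j = true)).card = 2)
    (hk2 : k ≤ n)
    (c : ((weldedGraph n W).induce (columnUnion n W k n)).ConnectedComponent)
    (v : ↥(columnUnion n W k n)) :
    v ∈ c.supp ↔ f0 n k W v = phi hW2 hk2 c := by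
  rw [SimpleGraph.ConnectedComponent.mem_supp_iff]
  constructor
  · rintro rfl; rfl
  · intro h
    rw [comp_eq_mk_root hW2 hk2 c, ← h]
    exact mk_eq_root hW2 hk2 v

/-- Map from the middle region to the small tree: subtract `k` from the level and keep
the position relative to the level-`k` ancestor. -/
def fwdT (n k : ℕ) : WTV n → TV (n-k)
  | Sum.inl a => ⟨⟨(a.1 : ℕ) - k, by have := a.1.isLt; omega⟩,
      ⟨(a.2 : ℕ) % 2^((a.1 : ℕ) - k), Nat.mod_lt _ (by positivity)⟩⟩
  | Sum.inr _ => wtRoot (n-k)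

/-- Map from the small tree into the middle region, in the fiber of `r`. -/
def bwdT (n k : ℕ) (hk2 : k ≤ n) (r : Fin (2^k)) (b : TV (n-k)) : WTV n :=
  Sum.inl ⟨⟨(b.1 : ℕ) + k, by have := b.1.isLt; omega⟩,
    ⟨((r : ℕ) * 2^(b.1 : ℕ) + (b.2 : ℕ)) % 2^((b.1 : ℕ) + k), Nat.mod_lt _ (by positivity)⟩⟩

lemma pack_lt {r x m K : ℕ} (hr : r < 2^K) (hx : x < 2^m) : r * 2^m + x < 2^(m+K) :=
  calc r * 2^m + x < r * 2^m + 2^m := by omega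
    _ = (r+1) * 2^m := by ring
    _ ≤ 2^K * 2^m := Nat.mul_le_mul_right _ (Nat.succ_le_of_lt hr)
    _ = 2^(m+K) := by rw [pow_add, mul_comm]

lemma bwd_idx_val (hk2 : k ≤ n) (r : Fin (2^k)) (b : TV (n-k)) :
    ((r : ℕ) * 2^(b.1 : ℕ) + (b.2 : ℕ)) % 2^((b.1 : ℕ) + k) =
      (r : ℕ) * 2^(b.1 : ℕ) + (b.2 : ℕ) :=
  Nat.mod_eq_of_lt (pack_lt r.isLt b.2.isLt)

lemma bwd_mem
    (hW2 : ∀ j : Fin (2^n), (Finset.univ.filter (fun i => W i j = true)).card = 2)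
    (hk2 : k ≤ n) (r : Fin (2^k)) (b : TV (n-k)) :
    bwdT n k hk2 r b ∈ columnUnion n W k n :=
  (mem_columnUnion_iff hW2 hk2 _).mpr ⟨_, rfl, by show k ≤ (b.1 : ℕ) + k; omega⟩

lemma bwd_f0
    (hW2 : ∀ j : Fin (2^n), (Finset.univ.filter (fun i => W i j = true)).card = 2)
    (hk2 : k ≤ n) (r : Fin (2^k)) (b : TV (n-k)) :
    f0 n k W ⟨bwdT n k hk2 r b, bwd_mem hW2 hk2 r b⟩ = r := by
  apply Fin.ext
  rw [f0_eq_fiber hW2 hk2]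
  show (((r : ℕ) * 2^(b.1 : ℕ) + (b.2 : ℕ)) % 2^((b.1 : ℕ) + k)) /
      2^(((b.1 : ℕ) + k) - k) = (r : ℕ)
  rw [bwd_idx_val hk2 r b, show ((b.1 : ℕ) + k) - k = (b.1 : ℕ) by omega,
    mul_comm (r : ℕ), Nat.mul_add_div (by positivity),
    Nat.div_eq_of_lt b.2.isLt, add_zero]

lemma fwd_bwd (hk2 : k ≤ n) (r : Fin (2^k)) (b : TV (n-k)) :
    fwdT n k (bwdT n k hk2 r b) = b := by
  apply TV_ext
  · show ((b.1 : ℕ) + k) - k = (b.1 : ℕ)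
    omega
  · show (((r : ℕ) * 2^(b.1 : ℕ) + (b.2 : ℕ)) % 2^((b.1 : ℕ) + k)) %
        2^(((b.1 : ℕ) + k) - k) = (b.2 : ℕ)
    rw [bwd_idx_val hk2 r b, show ((b.1 : ℕ) + k) - k = (b.1 : ℕ) by omega,
      mul_comm (r : ℕ), Nat.mul_add_mod, Nat.mod_eq_of_lt b.2.isLt]

lemma bwd_fwd (hk2 : k ≤ n) (r : Fin (2^k)) {a : TV n} (ha : k ≤ (a.1 : ℕ))
    (hfa : (a.2 : ℕ) / 2^((a.1 : ℕ) - k) = (r : ℕ)) :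
    bwdT n k hk2 r (fwdT n k (Sum.inl a)) = Sum.inl a := by
  have hexp : ((a.1 : ℕ) - k) + k = (a.1 : ℕ) := by omega
  have hX : (r : ℕ) * 2^((a.1 : ℕ) - k) + (a.2 : ℕ) % 2^((a.1 : ℕ) - k) = (a.2 : ℕ) := by
    rw [← hfa]
    exact Nat.div_add_mod' _ _
  show Sum.inl _ = Sum.inl a
  congr 1
  apply TV_ext
  · exact hexp
  · show ((r : ℕ) * 2^((a.1 : ℕ) - k) + (a.2 : ℕ) % 2^((a.1 : ℕ) - k)) %
        2^((((a.1 : ℕ) - k)) + k) = (a.2 : ℕ)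
    rw [hX, hexp]
    exact Nat.mod_eq_of_lt a.2.isLt

lemma clause_iff (hk2 : k ≤ n) {r : Fin (2^k)} {a b : TV n}
    (ha : k ≤ (a.1 : ℕ)) (hb : k ≤ (b.1 : ℕ))
    (hfa : (a.2 : ℕ) / 2^((a.1 : ℕ) - k) = (r : ℕ))
    (hfb : (b.2 : ℕ) / 2^((b.1 : ℕ) - k) = (r : ℕ)) :
    ((a.1 : ℕ) + 1 = (b.1 : ℕ) ∧ (b.2 : ℕ) / 2 = (a.2 : ℕ)) ↔
    ((((a.1 : ℕ) - k) + 1 = ((b.1 : ℕ) - k)) ∧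
      ((b.2 : ℕ) % 2^((b.1 : ℕ) - k)) / 2 = (a.2 : ℕ) % 2^((a.1 : ℕ) - k)) := by
  have da : (a.2 : ℕ) / 2^((a.1 : ℕ) - k) * 2^((a.1 : ℕ) - k) +
      (a.2 : ℕ) % 2^((a.1 : ℕ) - k) = (a.2 : ℕ) := Nat.div_add_mod' _ _
  have db : (b.2 : ℕ) / 2^((b.1 : ℕ) - k) * 2^((b.1 : ℕ) - k) +
      (b.2 : ℕ) % 2^((b.1 : ℕ) - k) = (b.2 : ℕ) := Nat.div_add_mod' _ _
  rw [hfa] at da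
  rw [hfb] at db
  constructor
  · rintro ⟨h1, h2⟩
    have hm' : (b.1 : ℕ) - k = ((a.1 : ℕ) - k) + 1 := by omega
    refine ⟨by omega, ?_⟩
    rw [hm'] at db ⊢
    rw [pow_succ] at db ⊢
    rw [← mul_assoc] at db
    generalize hx : (a.2 : ℕ) % 2^((a.1 : ℕ) - k) = x at da ⊢
    generalize hy : (b.2 : ℕ) % (2^((a.1 : ℕ) - k) * 2) = y at db ⊢
    generalize hR : (r : ℕ) * 2^((a.1 : ℕ) - k) = R at da db
    omega
  · rintro ⟨h1, h2⟩
    have h1' : (a.1 : ℕ) + 1 = (b.1 : ℕ) := by omega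
    refine ⟨h1', ?_⟩
    have hm' : (b.1 : ℕ) - k = ((a.1 : ℕ) - k) + 1 := by omega
    rw [hm'] at db h2
    rw [pow_succ] at db h2
    rw [← mul_assoc] at db
    generalize hx : (a.2 : ℕ) % 2^((a.1 : ℕ) - k) = x at da h2
    generalize hy : (b.2 : ℕ) % (2^((a.1 : ℕ) - k) * 2) = y at db h2
    generalize hR : (r : ℕ) * 2^((a.1 : ℕ) - k) = R at da db
    omega

lemma fwd_adj_iff (hk2 : k ≤ n) {r : Fin (2^k)} {a b : TV n}
    (ha : k ≤ (a.1 : ℕ)) (hb : k ≤ (b.1 : ℕ))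
    (hfa : (a.2 : ℕ) / 2^((a.1 : ℕ) - k) = (r : ℕ))
    (hfb : (b.2 : ℕ) / 2^((b.1 : ℕ) - k) = (r : ℕ)) :
    treeAdj (n-k) (fwdT n k (Sum.inl a)) (fwdT n k (Sum.inl b)) ↔ treeAdj n a b := by
  unfold treeAdj
  exact or_congr (clause_iff hk2 ha hb hfa hfb).symm (clause_iff hk2 hb ha hfb hfa).symm

lemma comp_iso
    (hW2 : ∀ j : Fin (2^n), (Finset.univ.filter (fun i => W i j = true)).card = 2)
    (hk2 : k ≤ n)
    (c : ((weldedGraph n W).induce (columnUnion n W k n)).ConnectedComponent) :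
    Nonempty ((((weldedGraph n W).induce (columnUnion n W k n)).induce c.supp) ≃g
      cbtGraph (n - k)) := by
  set r := phi hW2 hk2 c with hr
  have key : ∀ x : ↥(c.supp), ∃ a : TV n, x.1.1 = Sum.inl a ∧ k ≤ (a.1 : ℕ) ∧
      (a.2 : ℕ) / 2^((a.1 : ℕ) - k) = (r : ℕ) := by
    intro x
    obtain ⟨a, hxa, hka⟩ := (mem_columnUnion_iff hW2 hk2 x.1.1).mp x.1.2
    have hfx : f0 n k W x.1 = r := ((mem_supp_iff_f0 hW2 hk2 c x.1).mp x.2).trans hr.symm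
    have hfib : fiber n k x.1.1 = (r : ℕ) := by
      rw [← f0_eq_fiber hW2 hk2 x.1, hfx]
    rw [hxa] at hfib
    exact ⟨a, hxa, hka, hfib⟩
  refine ⟨⟨⟨fun x => fwdT n k x.1.1,
    fun b => ⟨⟨bwdT n k hk2 r b, bwd_mem hW2 hk2 r b⟩,
      (mem_supp_iff_f0 hW2 hk2 c _).mpr (by rw [← hr]; exact bwd_f0 hW2 hk2 r b)⟩,
    ?_, ?_⟩, ?_⟩⟩
  · intro x
    obtain ⟨a, hxa, hka, hfa⟩ := key x
    apply Subtype.ext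
    apply Subtype.ext
    show bwdT n k hk2 r (fwdT n k x.1.1) = x.1.1
    rw [hxa]
    exact bwd_fwd hk2 r hka hfa
  · intro b
    exact fwd_bwd hk2 r b
  · intro x y
    obtain ⟨a, hxa, hka, hfa⟩ := key x
    obtain ⟨b, hyb, hkb, hfb⟩ := key y
    have hiff : ((((weldedGraph n W).induce (columnUnion n W k n)).induce c.supp).Adj x y)
        ↔ (weldedGraph n W).Adj x.1.1 y.1.1 := Iff.rfl
    rw [hiff]
    show treeAdj (n-k) (fwdT n k x.1.1) (fwdT n k y.1.1) ↔ (weldedGraph n W).Adj x.1.1 y.1.1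
    rw [hxa, hyb]
    exact fwd_adj_iff hk2 hka hkb hfa hfb

end WeldedAux

/-- For `1 ≤ k ≤ n`, the subgraph of a welded-trees graph induced by
`C(k, n)` (all vertices at distance between `k` and `n` from `source`) is a disjoint
union of exactly `2^k` trees, each of which is a complete binary tree of height `n - k`:
it has exactly `2^k` connected components, and the subgraph induced by each component is
isomorphic to the complete binary tree of height `n - k`. -/
theorem welded_trees_induced_middle_forest (n : ℕ) (hn : 1 ≤ n)
    (W : Fin (2^n) → Fin (2^n) → Bool) (hW : IsWeldedData n W)
    (k : ℕ) (hk1 : 1 ≤ k) (hk2 : k ≤ n) :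
    Nat.card ((weldedGraph n W).induce (columnUnion n W k n)).ConnectedComponent = 2^k ∧
    (∀ c : ((weldedGraph n W).induce (columnUnion n W k n)).ConnectedComponent,
      Nonempty
        ((((weldedGraph n W).induce (columnUnion n W k n)).induce c.supp) ≃g
          cbtGraph (n - k))) := by
  obtain ⟨hW1, hW2, hW3⟩ := hW
  exact ⟨card_components hW2 hk2, fun c => comp_iso hW2 hk2 c⟩
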